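/- If (x; x_1,...,x_n) ∈ C, then x ≥ 0 and x_i ≥ 0 for every i with 1 ≤ i ≤ n. -/

import Mathlib

/-- The product `(x; x_i)·(y; y_i) = x*y - ∑ i, x_i * y_i` on `ℝ^{1+(n+3)}`. -/
def dotp {n : ℕ} (x y : ℝ × (Fin (n + 3) → ℝ)) : ℝ :=
  x.1 * y.1 - ∑ i, x.2 i * y.2 i

/-- The vector `-K = (3; 1, 1, …, 1)`. -/
def negK {n : ℕ} : ℝ × (Fin (n + 3) → ℝ) := (3, fun _ => 1)

/-- The Cremona transform. -/
def Cr {n : ℕ} (d : ℝ × (Fin (n + 3) → ℝ)) : ℝ × (Fin (n + 3) → ℝ) :=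
  (2 * d.1 - d.2 0 - d.2 1 - d.2 2,
    fun i =>
      if i = 0 then d.1 - d.2 1 - d.2 2
      else if i = 1 then d.1 - d.2 0 - d.2 2
      else if i = 2 then d.1 - d.2 0 - d.2 1
      else d.2 i)

/-- A vector is positive if all its entries are nonnegative. -/
def PositiveVec {n : ℕ} (d : ℝ × (Fin (n + 3) → ℝ)) : Prop :=
  0 ≤ d.1 ∧ ∀ i, 0 ≤ d.2 i

/-- A vector is ordered if `d_i ≥ d_{i+1}` whenever both are nonzero, and nonzero
entries precede zero entries. -/
def OrderedVec {n : ℕ} (d : ℝ × (Fin (n + 3) → ℝ)) : Prop :=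
  (∀ (i : ℕ) (h1 : i < n + 3) (h2 : i + 1 < n + 3),
      d.2 ⟨i, h1⟩ ≠ 0 → d.2 ⟨i + 1, h2⟩ ≠ 0 → d.2 ⟨i + 1, h2⟩ ≤ d.2 ⟨i, h1⟩) ∧
  (∀ i j : Fin (n + 3), d.2 i ≠ 0 → d.2 j = 0 → i < j)

/-- A vector is reduced if it is positive, ordered, and `d ≥ d_1 + d_2 + d_3`. -/
def ReducedVec {n : ℕ} (d : ℝ × (Fin (n + 3) → ℝ)) : Prop :=
  PositiveVec d ∧ OrderedVec d ∧ d.2 0 + d.2 1 + d.2 2 ≤ d.1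

/-- A vector has integer entries. -/
def IntVec {n : ℕ} (d : ℝ × (Fin (n + 3) → ℝ)) : Prop :=
  (∃ z : ℤ, d.1 = z) ∧ ∀ i, ∃ z : ℤ, d.2 i = z

/-- The set `E` of integer vectors with `(d;d_i)·(d;d_i) ≥ -1` and `-K·(d;d_i) = 1`. -/
def ESet {n : ℕ} : Set (ℝ × (Fin (n + 3) → ℝ)) :=
  {d | IntVec d ∧ -1 ≤ dotp d d ∧ dotp negK d = 1}

/-- The set `C` of integer vectors with `(x;x_i)·(x;x_i) ≥ 0` that pair nonnegatively
with every element of `E`. -/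
def CSet {n : ℕ} : Set (ℝ × (Fin (n + 3) → ℝ)) :=
  {x | IntVec x ∧ 0 ≤ dotp x x ∧ ∀ d ∈ ESet, 0 ≤ dotp x d}

theorem C_nonneg {n : ℕ} (x : ℝ × (Fin (n + 3) → ℝ)) (hx : x ∈ CSet) :
    0 ≤ x.1 ∧ ∀ i, 0 ≤ x.2 i := by
  obtain ⟨hint, hself, hE⟩ := hx
  have hcoord : ∀ i, 0 ≤ x.2 i := by
    intro i
    have hmem : ((0 : ℝ), fun j => if j = i then (-1 : ℝ) else 0) ∈ (ESet (n := n)) := by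
      refine ⟨⟨⟨0, by norm_num⟩, fun j => ⟨if j = i then (-1 : ℤ) else 0, by split <;> simp_all⟩⟩, ?_, ?_⟩
      · simp [dotp, ite_mul, Finset.sum_ite_eq']
      · simp [dotp, negK, Finset.sum_ite_eq']
    have := hE _ hmem
    simpa [dotp, mul_ite, Finset.sum_ite_eq'] using this
  refine ⟨?_, hcoord⟩
  have hmem : ((1 : ℝ), fun j : Fin (n+3) =>
      (if j = 0 then (1:ℝ) else 0) + (if j = 1 then (1:ℝ) else 0)) ∈ (ESet (n := n)) := by
    refine ⟨⟨⟨1, by norm_num⟩, fun j => ⟨(if j = 0 then (1:ℤ) else 0) + (if j = 1 then (1:ℤ) else 0), by rcases eq_or_ne j 0 with h0 | h0 <;> rcases eq_or_ne j 1 with h1 | h1 <;> simp [h0, h1]⟩⟩, ?_, ?_⟩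
    · have : ∀ j : Fin (n+3),
        ((if j = 0 then (1:ℝ) else 0) + (if j = 1 then (1:ℝ) else 0)) *
        ((if j = 0 then (1:ℝ) else 0) + (if j = 1 then (1:ℝ) else 0)) =
        (if j = 0 then (1:ℝ) else 0) + (if j = 1 then (1:ℝ) else 0) := by
        intro j; rcases eq_or_ne j 0 with h0 | h0 <;> rcases eq_or_ne j 1 with h1 | h1 <;> simp [h0, h1]
      simp only [dotp, this, Finset.sum_add_distrib, Finset.sum_ite_eq']
      norm_num
    · simp only [dotp, negK, mul_add, mul_ite, Finset.sum_add_distrib, Finset.sum_ite_eq',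
        Finset.mem_univ, if_true, mul_one, mul_zero]
      norm_num
  have h := hE _ hmem
  have h' : x.1 - (x.2 0 + x.2 1) ≥ 0 := by
    have : dotp x ((1 : ℝ), fun j : Fin (n+3) =>
      (if j = 0 then (1:ℝ) else 0) + (if j = 1 then (1:ℝ) else 0)) = x.1 - (x.2 0 + x.2 1) := by
      simp [dotp, mul_add, mul_ite, Finset.sum_add_distrib, Finset.sum_ite_eq']
    linarith [h, this.symm ▸ h]
  have := hcoord 0
  have := hcoord 1
  linarith
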